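/- If G is a canonically prime bipartite graph and φ is an induced-subgraph embedding of G into the Z-grid Z_{n,k}, then the set of columns of Z_{n,k} containing at least one vertex of φ(G) is a set of consecutive integers. -/

import Mathlib

def Zrel (i j i' j' : ℕ) : Prop :=
  (Odd i ∧ i' = i + 1 ∧ j' < j) ∨
  (Even i ∧ i' = i + 1 ∧ j ≤ j') ∨
  (Even i ∧ Odd i' ∧ i + 3 ≤ i')

def Zgrid (n k : ℕ) : SimpleGraph (Fin n × Fin k) :=
  SimpleGraph.fromRel (fun u v =>
    Zrel (u.1.val + 1) (u.2.val + 1) (v.1.val + 1) (v.2.val + 1))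

def IsCanonicalSplit {V : Type*} (G : SimpleGraph V) (P : V → Bool)
    (A : Set V) : Prop :=
  A.Nonempty ∧ Aᶜ.Nonempty ∧
  ((∀ a ∈ A, ∀ b ∈ Aᶜ, ¬ G.Adj a b) ∨
   (∀ a ∈ A, ∀ b ∈ Aᶜ, P a ≠ P b → G.Adj a b) ∨
   (∀ a ∈ A, ∀ b ∈ Aᶜ, (G.Adj a b ↔ (P a = true ∧ P b = false))) ∨
   (∀ a ∈ A, ∀ b ∈ Aᶜ, (G.Adj a b ↔ (P a = false ∧ P b = true))))

theorem prime_embedding_consecutive_columns {V : Type*} (G : SimpleGraph V)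
    (P : V → Bool) (hbip : ∀ a b, G.Adj a b → P a ≠ P b)
    (hprime : ∀ A : Set V, ¬ IsCanonicalSplit G P A)
    (n k : ℕ) (φ : G ↪g Zgrid n k) :
    ∀ c₁ c₂ c₃ : Fin n, c₁ ≤ c₂ → c₂ ≤ c₃ →
      (∃ v, (φ v).1 = c₁) → (∃ v, (φ v).1 = c₃) → ∃ v, (φ v).1 = c₂ := by
  intro c₁ c₂ c₃ h12 h23 hv1 hv3
  obtain ⟨v₁, hv₁⟩ := hv1
  obtain ⟨v₃, hv₃⟩ := hv3
  by_contra hno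
  push_neg at hno
  -- parity flips along every edge of G
  have hflip : ∀ u v, G.Adj u v → ((φ u).1.val % 2 ≠ (φ v).1.val % 2) := by
    intro u v huv
    have h : (Zgrid n k).Adj (φ u) (φ v) := φ.map_rel_iff.mpr huv
    simp only [Zgrid, SimpleGraph.fromRel_adj] at h
    obtain ⟨-, h⟩ := h
    simp only [Zrel, Nat.even_iff, Nat.odd_iff] at h
    omega
  -- G is connected
  have hconn : ∀ u v, G.Reachable u v := by
    by_contra hc
    push_neg at hc
    obtain ⟨u, v, huv⟩ := hc
    apply hprime {w | G.Reachable u w}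
    refine ⟨⟨u, SimpleGraph.Reachable.refl u⟩, ⟨v, huv⟩, Or.inl ?_⟩
    intro a ha b hb hab
    exact hb (ha.trans hab.reachable)
  -- the bipartition agrees with column parity, up to a global flip
  set e : V → Bool := fun v => decide ((φ v).1.val % 2 = 0) with he
  have hpar : ∀ u v : V, (P u).xor (e u) = (P v).xor (e v) := by
    intro u v
    obtain ⟨w⟩ := hconn u v
    induction w with
    | nil => rfl
    | @cons x y z h p ih =>
      rw [← ih]
      have h1 := hbip _ _ h
      have h2 := hflip _ _ h
      have hx := Nat.mod_two_eq_zero_or_one ((φ x).1.val)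
      have hy := Nat.mod_two_eq_zero_or_one ((φ y).1.val)
      have hex : e x = decide ((φ x).1.val % 2 = 0) := rfl
      have hey : e y = decide ((φ y).1.val % 2 = 0) := rfl
      rcases hx with hx' | hx' <;> rcases hy with hy' | hy' <;>
        simp [hex, hey, hx', hy'] at * <;>
        cases hPx : P x <;> cases hPy : P y <;> simp_all
  set t : Bool := (P v₁).xor (e v₁) with ht
  have hPt : ∀ v, P v = t.xor (e v) := by
    intro v
    have := (hpar v v₁).symm
    rw [← ht] at this
    cases hev : e v <;> cases hPv : P v <;> simp_all
  -- the split at the gap column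
  have hc12 : c₁.val < c₂.val := by
    have h1 : c₁.val ≤ c₂.val := h12
    have h2 : c₁.val ≠ c₂.val := fun h => hno v₁ (by rw [hv₁]; exact Fin.val_injective h)
    omega
  have hc23 : c₂.val < c₃.val := by
    have h1 : c₂.val ≤ c₃.val := h23
    have h2 : c₂.val ≠ c₃.val := fun h => hno v₃ (by rw [hv₃]; exact (Fin.val_injective h).symm)
    omega
  have key : ∀ a b : V, (φ a).1.val < c₂.val → c₂.val < (φ b).1.val →
      (G.Adj a b ↔ ((φ a).1.val % 2 = 1 ∧ (φ b).1.val % 2 = 0)) := by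
    intro a b ha hb
    rw [← φ.map_rel_iff]
    constructor
    · intro h
      simp only [Zgrid, SimpleGraph.fromRel_adj] at h
      obtain ⟨-, h⟩ := h
      simp only [Zrel, Nat.even_iff, Nat.odd_iff] at h
      omega
    · rintro ⟨h1, h2⟩
      simp only [Zgrid, SimpleGraph.fromRel_adj]
      constructor
      · intro hE
        have : (φ a).1.val = (φ b).1.val := congrArg (fun x : Fin n × Fin k => x.1.val) hE
        omega
      · refine Or.inl ?_
        simp only [Zrel, Nat.even_iff, Nat.odd_iff]
        omega
  apply hprime {v | (φ v).1.val < c₂.val}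
  have hmem3 : v₃ ∈ ({v | (φ v).1.val < c₂.val} : Set V)ᶜ := by
    simp only [Set.mem_compl_iff, Set.mem_setOf_eq, not_lt]
    rw [hv₃]; omega
  have hgt : ∀ b : V, b ∈ ({v | (φ v).1.val < c₂.val} : Set V)ᶜ → c₂.val < (φ b).1.val := by
    intro b hb
    simp only [Set.mem_compl_iff, Set.mem_setOf_eq, not_lt] at hb
    have : (φ b).1.val ≠ c₂.val := fun h => hno b (Fin.val_injective h)
    omega
  refine ⟨⟨v₁, by simp only [Set.mem_setOf_eq]; rw [hv₁]; omega⟩, ⟨v₃, hmem3⟩, ?_⟩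
  have main : ∀ a ∈ ({v | (φ v).1.val < c₂.val} : Set V),
      ∀ b ∈ ({v | (φ v).1.val < c₂.val} : Set V)ᶜ,
      (G.Adj a b ↔ (P a = t.xor false ∧ P b = t.xor true)) := by
    intro a ha b hb
    rw [key a b ha (hgt b hb), hPt a, hPt b]
    have hea : e a = decide ((φ a).1.val % 2 = 0) := rfl
    have heb : e b = decide ((φ b).1.val % 2 = 0) := rfl
    have hxa := Nat.mod_two_eq_zero_or_one ((φ a).1.val)
    have hxb := Nat.mod_two_eq_zero_or_one ((φ b).1.val)
    rcases hxa with hxa' | hxa' <;> rcases hxb with hxb' | hxb' <;>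
      simp [hea, heb, hxa', hxb']
  cases ht' : t with
  | false =>
    refine Or.inr (Or.inr (Or.inr ?_))
    intro a ha b hb
    have := main a ha b hb
    rw [ht'] at this
    simpa using this
  | true =>
    refine Or.inr (Or.inr (Or.inl ?_))
    intro a ha b hb
    have := main a ha b hb
    rw [ht'] at this
    simpa using this
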